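/- Let Γ be a finite set containing two distinct points a and b, and let λ : Γ → [0, ∞) satisfy λ(a) = λ(b). Let Ψ be a random element of ℤ≥0^Γ with E[Σ_{α∈Γ} Ψ(α)] < ∞ satisfying E[B_0 g(Ψ)] = 0 for every bounded function g : ℤ≥0^Γ → ℝ, and suppose P[Ψ = δ_a] = P[Ψ = δ_b]. Then for every bounded g : ℤ≥0^Γ → ℝ, E[A g(Ψ)] = −P[Ψ = δ_a] · Δ_{ab} g(0), where Δ_{ab} g(ξ) = g(ξ+δ_a+δ_b) − g(ξ+δ_a) − g(ξ+δ_b) + g(ξ) and 0 is the empty configuration. -/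

import Mathlib

open MeasureTheory

/-- The configuration with exactly one point at `a`. -/
def deltaAt {Γ : Type*} [DecidableEq Γ] (a : Γ) : Γ → ℕ := fun x => if x = a then 1 else 0

/-- The Poisson point process Stein operator
`A g(ξ) = Σ_α λ(α)[g(ξ+δ_α) − g(ξ)] + Σ_α ξ(α)[g(ξ−δ_α) − g(ξ)]`. -/
noncomputable def ppSteinA {Γ : Type*} [Fintype Γ] [DecidableEq Γ] (lam : Γ → ℝ)
    (g : (Γ → ℕ) → ℝ) (ξ : Γ → ℕ) : ℝ :=
  (∑ α, lam α * (g (ξ + deltaAt α) - g ξ)) + ∑ α, (ξ α : ℝ) * (g (ξ - deltaAt α) - g ξ)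

/-- The perturbed Poisson point process Stein operator `B_0`, perturbed at the
configurations `δ_a` and `δ_b`. -/
noncomputable def ppSteinB {Γ : Type*} [Fintype Γ] [DecidableEq Γ] (lam : Γ → ℝ) (a b : Γ)
    (g : (Γ → ℕ) → ℝ) (ξ : Γ → ℕ) : ℝ :=
  ppSteinA lam g ξ
    + (1 / 2) * (if ξ = deltaAt a then (1 : ℝ) else 0) * (g (ξ + deltaAt b) - g ξ)
    + (1 / 2) * (if ξ = deltaAt b then (1 : ℝ) else 0) * (g (ξ + deltaAt a) - g ξ)
    + (1 / 2) * (if ξ = deltaAt a then (1 : ℝ) else 0) * (g (ξ - deltaAt a) - g ξ)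
    + (1 / 2) * (if ξ = deltaAt b then (1 : ℝ) else 0) * (g (ξ - deltaAt b) - g ξ)

/-- Let `Γ` be a finite set with distinct points `a ≠ b` and
`λ : Γ → [0,∞)` with `λ(a) = λ(b)`. If `Ψ` is a random configuration with finite mean number
of points satisfying `E[B_0 g(Ψ)] = 0` for every bounded `g` and `P[Ψ = δ_a] = P[Ψ = δ_b]`,
then for every bounded `g`, `E[A g(Ψ)] = −P[Ψ = δ_a] · Δ_{ab} g(0)`. -/
theorem pp_perturbed_stein_identity
    {Ω : Type*} [MeasurableSpace Ω] (P : Measure Ω) [IsProbabilityMeasure P]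
    {Γ : Type*} [Fintype Γ] [DecidableEq Γ] (a b : Γ) (hab : a ≠ b)
    (lam : Γ → ℝ) (hlam : ∀ α, 0 ≤ lam α) (hlamab : lam a = lam b)
    (Ψ : Ω → Γ → ℕ) (hΨ : Measurable Ψ)
    (hint : Integrable (fun ω => ∑ α, (Ψ ω α : ℝ)) P)
    (hstein : ∀ g : (Γ → ℕ) → ℝ, (∃ C : ℝ, ∀ ξ, |g ξ| ≤ C) →
      ∫ ω, ppSteinB lam a b g (Ψ ω) ∂P = 0)
    (hsym : P {ω | Ψ ω = deltaAt a} = P {ω | Ψ ω = deltaAt b}) :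
    ∀ g : (Γ → ℕ) → ℝ, (∃ C : ℝ, ∀ ξ, |g ξ| ≤ C) →
      ∫ ω, ppSteinA lam g (Ψ ω) ∂P =
        -(P {ω | Ψ ω = deltaAt a}).toReal *
          (g (deltaAt a + deltaAt b) - g (deltaAt a) - g (deltaAt b) + g 0) := by
  classical
  intro g hg
  obtain ⟨C, hC⟩ := hg
  have hC2 : ∀ ξ η : Γ → ℕ, |g ξ - g η| ≤ 2 * C := fun ξ η =>
    (abs_sub _ _).trans (by linarith [hC ξ, hC η])
  have hmeas : ∀ h : (Γ → ℕ) → ℝ, Measurable fun ω => h (Ψ ω) :=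
    fun h => (measurable_of_countable h).comp hΨ
  have habd : deltaAt a ≠ deltaAt b := by
    intro h
    have := congrFun h a
    simp [deltaAt, hab] at this
  have hdsuba : (deltaAt a : Γ → ℕ) - deltaAt a = 0 := by
    funext x; simp [Pi.sub_apply]
  have hdsubb : (deltaAt b : Γ → ℕ) - deltaAt b = 0 := by
    funext x; simp [Pi.sub_apply]
  have hcomm : (deltaAt b : Γ → ℕ) + deltaAt a = deltaAt a + deltaAt b := add_comm _ _
  have hSa : MeasurableSet {ω | Ψ ω = deltaAt a} := hΨ (measurableSet_singleton _)
  have hSb : MeasurableSet {ω | Ψ ω = deltaAt b} := hΨ (measurableSet_singleton _)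
  -- integrability of the A part
  have hf1 : Integrable (fun ω => ∑ α, lam α * (g (Ψ ω + deltaAt α) - g (Ψ ω))) P := by
    refine (integrable_const (∑ α : Γ, lam α * (2 * C))).mono'
      ((hmeas fun ξ => ∑ α, lam α * (g (ξ + deltaAt α) - g ξ)).aestronglyMeasurable)
      (Filter.Eventually.of_forall fun ω => ?_)
    rw [Real.norm_eq_abs]
    calc |∑ α, lam α * (g (Ψ ω + deltaAt α) - g (Ψ ω))|
        ≤ ∑ α, |lam α * (g (Ψ ω + deltaAt α) - g (Ψ ω))| := Finset.abs_sum_le_sum_abs _ _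
      _ ≤ ∑ α, lam α * (2 * C) := Finset.sum_le_sum fun α _ => by
          rw [abs_mul, abs_of_nonneg (hlam α)]
          exact mul_le_mul_of_nonneg_left (hC2 _ _) (hlam α)
  have hf2 : Integrable (fun ω => ∑ α, (Ψ ω α : ℝ) * (g (Ψ ω - deltaAt α) - g (Ψ ω))) P := by
    refine (hint.const_mul (2 * C)).mono'
      ((hmeas fun ξ => ∑ α, (ξ α : ℝ) * (g (ξ - deltaAt α) - g ξ)).aestronglyMeasurable)
      (Filter.Eventually.of_forall fun ω => ?_)
    calc |∑ α, (Ψ ω α : ℝ) * (g (Ψ ω - deltaAt α) - g (Ψ ω))|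
        ≤ ∑ α, |(Ψ ω α : ℝ) * (g (Ψ ω - deltaAt α) - g (Ψ ω))| := Finset.abs_sum_le_sum_abs _ _
      _ ≤ ∑ α, (Ψ ω α : ℝ) * (2 * C) := Finset.sum_le_sum fun α _ => by
          rw [abs_mul, Nat.abs_cast]
          exact mul_le_mul_of_nonneg_left (hC2 _ _) (Nat.cast_nonneg _)
      _ = 2 * C * ∑ α, (Ψ ω α : ℝ) := by rw [← Finset.sum_mul]; ring
  have hA : Integrable (fun ω => ppSteinA lam g (Ψ ω)) P := by
    exact hf1.add hf2
  -- the perturbation as indicator functions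
  have hB_eq : ∀ ω, ppSteinB lam a b g (Ψ ω) = ppSteinA lam g (Ψ ω)
      + (Set.indicator {ω' | Ψ ω' = deltaAt a}
          (fun _ => 1/2 * (g (deltaAt a + deltaAt b) - g (deltaAt a))
            + 1/2 * (g 0 - g (deltaAt a))) ω
        + Set.indicator {ω' | Ψ ω' = deltaAt b}
          (fun _ => 1/2 * (g (deltaAt a + deltaAt b) - g (deltaAt b))
            + 1/2 * (g 0 - g (deltaAt b))) ω) := by
    intro ω
    by_cases ha : Ψ ω = deltaAt a
    · have hb : Ψ ω ≠ deltaAt b := by rw [ha]; exact habd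
      simp [ppSteinB, Set.indicator_apply, ha, hb, habd, hdsuba]
      ring
    · by_cases hb : Ψ ω = deltaAt b
      · simp [ppSteinB, Set.indicator_apply, ha, hb, hdsubb, hcomm, Ne.symm habd]
        ring
      · simp [ppSteinB, Set.indicator_apply, ha, hb]
  have hind1 : Integrable (Set.indicator {ω' | Ψ ω' = deltaAt a}
      (fun _ => 1/2 * (g (deltaAt a + deltaAt b) - g (deltaAt a))
        + 1/2 * (g 0 - g (deltaAt a)))) P := (integrable_const _).indicator hSa
  have hind2 : Integrable (Set.indicator {ω' | Ψ ω' = deltaAt b}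
      (fun _ => 1/2 * (g (deltaAt a + deltaAt b) - g (deltaAt b))
        + 1/2 * (g 0 - g (deltaAt b)))) P := (integrable_const _).indicator hSb
  have hind12 : Integrable (fun ω => Set.indicator {ω' | Ψ ω' = deltaAt a}
      (fun _ => 1/2 * (g (deltaAt a + deltaAt b) - g (deltaAt a))
        + 1/2 * (g 0 - g (deltaAt a))) ω
      + Set.indicator {ω' | Ψ ω' = deltaAt b}
      (fun _ => 1/2 * (g (deltaAt a + deltaAt b) - g (deltaAt b))
        + 1/2 * (g 0 - g (deltaAt b))) ω) P := hind1.add hind2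
  have h0 := hstein g ⟨C, hC⟩
  rw [show (fun ω => ppSteinB lam a b g (Ψ ω)) = _ from funext hB_eq,
      integral_add hA hind12, integral_add hind1 hind2,
      integral_indicator_const _ hSa, integral_indicator_const _ hSb, measureReal_def, measureReal_def, ← hsym] at h0
  simp only [smul_eq_mul] at h0
  linear_combination h0
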